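/- Let (T, 𝒢) be a tree of finite groups with completion G, fix a vertex v_* and a subgroup P ≤ 𝒢(v_*). Then there is an isomorphism of graphs T̃^P / C_G(P) ≅ Rep_G(P, 𝒢), sending the orbit of a vertex g𝒢(v) of the fixed-point subtree T̃^P to the class [c_g] of the conjugation homomorphism c_g : P → 𝒢(v), modulo inner automorphisms of 𝒢(v) (and similarly on edges). -/

import Mathlib

section BassSerre

variable {V : Type*} (T : SimpleGraph V) {G : Type*} [Group G] (𝒢 : V → Subgroup G)

/-- The Bass–Serre graph of a tree of groups realized inside its completion `G`. -/
def BassSerre : SimpleGraph ((v : V) × (G ⧸ 𝒢 v)) where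
  Adj x y := T.Adj x.1 y.1 ∧ ∃ i : G,
    (QuotientGroup.mk i : G ⧸ 𝒢 x.1) = x.2 ∧ (QuotientGroup.mk i : G ⧸ 𝒢 y.1) = y.2
  symm := by constructor; rintro x y ⟨h, i, h1, h2⟩; exact ⟨h.symm, i, h2, h1⟩
  loopless := by constructor; rintro x ⟨h, -⟩; exact T.loopless.irrefl _ h

variable (P : Subgroup G)

/-- The vertices (and implicitly edges) of the fixed-point subtree `T̃^P`: cosets fixed
under left multiplication by `P`. -/
abbrev FixedVert : Type _ :=
  {x : (v : V) × (G ⧸ 𝒢 v) // ∀ g ∈ P, g • x.2 = x.2}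

/-- The orbit relation of the centralizer `C_G(P)` acting on `T̃^P`. -/
def centRel (x y : FixedVert 𝒢 P) : Prop :=
  ∃ z ∈ Subgroup.centralizer (P : Set G), y.1 = ⟨x.1.1, z • x.1.2⟩

/-- Adjacency on the quotient graph `T̃^P / C_G(P)`. -/
def quotAdj (c d : Quot (centRel 𝒢 P)) : Prop :=
  ∃ x y : FixedVert 𝒢 P, Quot.mk _ x = c ∧ Quot.mk _ y = d ∧
    (BassSerre T 𝒢).Adj x.1 y.1

/-- `Hom_G(P, 𝒢 v)`: elements `g : G` with `P^g ≤ 𝒢 v`, representing the conjugation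
homomorphisms `c_g : P → 𝒢 v`. -/
abbrev HomSet (v : V) : Type _ :=
  {g : G // ∀ x ∈ P, g⁻¹ * x * g ∈ 𝒢 v}

/-- Two conjugation homomorphisms `c_g, c_g' : P → 𝒢 v` give the same class in
`Rep_G(P, 𝒢 v)` iff they differ by an inner automorphism of `𝒢 v`, i.e.
`g' = z g r` with `z ∈ C_G(P)` and `r ∈ 𝒢 v`. -/
def repRel (v : V) (g g' : HomSet 𝒢 P v) : Prop :=
  ∃ z ∈ Subgroup.centralizer (P : Set G), ∃ r ∈ 𝒢 v, (g'.val : G) = z * g.val * r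

/-- The vertex set of the graph `Rep_G(P, 𝒢)`: the disjoint union of the
`Rep_G(P, 𝒢 v)`. -/
abbrev RepVert : Type _ :=
  (v : V) × Quot (repRel 𝒢 P v)

/-- Adjacency in `Rep_G(P, 𝒢)`: two classes are joined by an edge `[c_i]_{𝒢 e}`,
`𝒢 e = 𝒢 v ⊓ 𝒢 w`, iff `v, w` are adjacent in `T` and a single `i : G` with
`P^i ≤ 𝒢 v ⊓ 𝒢 w` represents both. -/
def repAdj (c d : RepVert 𝒢 P) : Prop :=
  T.Adj c.1 d.1 ∧ ∃ (gi : HomSet 𝒢 P c.1) (gj : HomSet 𝒢 P d.1),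
    (gi.val : G) = gj.val ∧ Quot.mk _ gi = c.2 ∧ Quot.mk _ gj = d.2

end BassSerre

section Aux

variable {V : Type*} {G : Type*} [Group G] (𝒢 : V → Subgroup G) (P : Subgroup G)

lemma fix_of_hom (v : V) (g : G) (h : ∀ x ∈ P, g⁻¹ * x * g ∈ 𝒢 v) :
    ∀ x ∈ P, x • (QuotientGroup.mk g : G ⧸ 𝒢 v) = QuotientGroup.mk g := by
  intro x hx
  show (QuotientGroup.mk (x * g) : G ⧸ 𝒢 v) = QuotientGroup.mk g
  rw [QuotientGroup.eq]
  simpa [mul_assoc, mul_inv_rev] using h x⁻¹ (inv_mem hx)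

lemma hom_of_fix (v : V) (g : G)
    (h : ∀ x ∈ P, x • (QuotientGroup.mk g : G ⧸ 𝒢 v) = QuotientGroup.mk g) :
    ∀ x ∈ P, g⁻¹ * x * g ∈ 𝒢 v := by
  intro x hx
  have h' := h x⁻¹ (inv_mem hx)
  rw [show x⁻¹ • (QuotientGroup.mk g : G ⧸ 𝒢 v) = QuotientGroup.mk (x⁻¹ * g) from rfl,
    QuotientGroup.eq] at h'
  simpa [mul_assoc, mul_inv_rev] using h'

/-- The fixed vertex associated to a conjugation homomorphism. -/
def toFixed (v : V) (g : HomSet 𝒢 P v) : FixedVert 𝒢 P :=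
  ⟨⟨v, QuotientGroup.mk g.val⟩, fix_of_hom 𝒢 P v g.val g.2⟩

lemma centRel_equivalence : Equivalence (centRel 𝒢 P) := by
  constructor
  · intro x
    exact ⟨1, one_mem _, by simp⟩
  · rintro ⟨⟨v, c⟩, hx⟩ ⟨⟨w, d⟩, hy⟩ ⟨z, hz, heq⟩
    injection heq with h1 h2
    subst h1
    obtain rfl := eq_of_heq h2
    exact ⟨z⁻¹, inv_mem hz, by simp⟩
  · rintro ⟨⟨v, c⟩, hx⟩ ⟨⟨w, d⟩, hy⟩ ⟨⟨u, b⟩, hw⟩ ⟨z, hz, heq⟩ ⟨z', hz', heq'⟩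
    injection heq with h1 h2
    subst h1
    obtain rfl := eq_of_heq h2
    injection heq' with h1' h2'
    subst h1'
    obtain rfl := eq_of_heq h2'
    exact ⟨z' * z, mul_mem hz' hz, by simp [mul_smul]⟩

/-- The map `Rep_G(P,𝒢) → T̃^P / C_G(P)`. -/
def psi : RepVert 𝒢 P → Quot (centRel 𝒢 P) := fun a =>
  Quot.lift (fun g => Quot.mk _ (toFixed 𝒢 P a.1 g))
    (by
      rintro g g' ⟨z, hz, r, hr, hgg⟩
      refine Quot.sound ⟨z, hz, ?_⟩
      show (⟨a.1, QuotientGroup.mk g'.val⟩ : (v : V) × (G ⧸ 𝒢 v)) =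
        ⟨a.1, z • QuotientGroup.mk g.val⟩
      congr 1
      show (QuotientGroup.mk g'.val : G ⧸ 𝒢 a.1) = QuotientGroup.mk (z * g.val)
      rw [QuotientGroup.eq, hgg]
      simpa [mul_assoc, mul_inv_rev] using hr) a.2

lemma psi_bijective : Function.Bijective (psi 𝒢 P) := by
  constructor
  · rintro ⟨v, q⟩ ⟨w, q'⟩ h
    induction q using Quot.ind with | mk g => ?_
    induction q' using Quot.ind with | mk g' => ?_
    have h' : centRel 𝒢 P (toFixed 𝒢 P v g) (toFixed 𝒢 P w g') :=
      ((centRel_equivalence 𝒢 P).eqvGen_iff).mp (Quot.eq.mp h)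
    obtain ⟨z, hz, heq⟩ := h'
    injection heq with h1 h2
    subst h1
    refine congrArg (Sigma.mk _) (Quot.sound ?_)
    have h4 := QuotientGroup.eq.mp
      (show (QuotientGroup.mk g'.val : G ⧸ 𝒢 w) = QuotientGroup.mk (z * g.val) from
        eq_of_heq h2)
    exact ⟨z, hz, (g'.val⁻¹ * (z * g.val))⁻¹, inv_mem h4, by group⟩
  · intro c
    induction c using Quot.ind with | mk x => ?_
    obtain ⟨⟨v, cv⟩, hx⟩ := x
    induction cv using QuotientGroup.induction_on with | H g => ?_
    exact ⟨⟨v, Quot.mk _ ⟨g, hom_of_fix 𝒢 P v g hx⟩⟩, rfl⟩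

end Aux

/-- Let `(T, 𝒢)` be a tree of finite groups with completion `G`
(vertex groups finite, generating `G`, with the colimit universal property), fix a vertex
`v⋆` and a subgroup `P ≤ 𝒢 v⋆`.  Then there is an isomorphism of graphs
`T̃^P / C_G(P) ≅ Rep_G(P, 𝒢)` sending the `C_G(P)`-orbit of a fixed vertex `g𝒢(v)` of
the Bass–Serre tree to the class `[c_g]` of the conjugation homomorphism
`c_g : P → 𝒢 v` modulo inner automorphisms of `𝒢 v` (and similarly on edges). -/
theorem stmt_15 {V : Type} [Fintype V] (T : SimpleGraph V) (hT : T.IsTree)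
    (G : Type) [Group G] (𝒢 : V → Subgroup G) (hfin : ∀ v, Finite (𝒢 v))
    (hgen : (⨆ v, 𝒢 v) = ⊤)
    (huniv : ∀ (H : Type) [Group H] (f : ∀ v, ↥(𝒢 v) →* H),
      (∀ v w, T.Adj v w → ∀ (x : G) (hv : x ∈ 𝒢 v) (hw : x ∈ 𝒢 w),
        f v ⟨x, hv⟩ = f w ⟨x, hw⟩) →
      ∃ F : G →* H, ∀ (v : V) (x : ↥(𝒢 v)), F ↑x = f v x)
    (vstar : V) (P : Subgroup G) (hP : P ≤ 𝒢 vstar) :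
    ∃ e : Quot (centRel 𝒢 P) ≃ RepVert 𝒢 P,
      (∀ (v : V) (g : G)
        (hfix : ∀ x ∈ P, x • (QuotientGroup.mk g : G ⧸ 𝒢 v) = QuotientGroup.mk g)
        (h2 : ∀ x ∈ P, g⁻¹ * x * g ∈ 𝒢 v),
        e (Quot.mk _ (⟨⟨v, QuotientGroup.mk g⟩, hfix⟩ : FixedVert 𝒢 P)) =
          ⟨v, Quot.mk _ (⟨g, h2⟩ : HomSet 𝒢 P v)⟩) ∧
      (∀ c d : Quot (centRel 𝒢 P), quotAdj T 𝒢 P c d ↔ repAdj T 𝒢 P (e c) (e d)) := by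
  set E : RepVert 𝒢 P ≃ Quot (centRel 𝒢 P) := Equiv.ofBijective _ (psi_bijective 𝒢 P) with hE
  refine ⟨E.symm, ?_, ?_⟩
  · intro v g hfix h2
    rw [Equiv.symm_apply_eq]
    rfl
  · have key : ∀ (v : V) (g : G) (hfix : ∀ x ∈ P, x • (QuotientGroup.mk g : G ⧸ 𝒢 v)
        = QuotientGroup.mk g) (h2 : ∀ x ∈ P, g⁻¹ * x * g ∈ 𝒢 v),
        E.symm (Quot.mk _ (⟨⟨v, QuotientGroup.mk g⟩, hfix⟩ : FixedVert 𝒢 P)) =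
          ⟨v, Quot.mk _ (⟨g, h2⟩ : HomSet 𝒢 P v)⟩ := by
      intro v g hfix h2
      rw [Equiv.symm_apply_eq]
      rfl
    intro c d
    constructor
    · rintro ⟨x, y, hc, hd, hTadj, i, hi1, hi2⟩
      obtain ⟨⟨v, cv⟩, hx⟩ := x
      obtain ⟨⟨w, dw⟩, hy⟩ := y
      simp only at hi1 hi2 hTadj
      subst hi1; subst hi2; subst hc; subst hd
      rw [key v i hx (hom_of_fix 𝒢 P v i hx), key w i hy (hom_of_fix 𝒢 P w i hy)]
      exact ⟨hTadj, ⟨i, hom_of_fix 𝒢 P v i hx⟩, ⟨i, hom_of_fix 𝒢 P w i hy⟩, rfl, rfl, rfl⟩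
    · rintro ⟨hTadj, gi, gj, hval, hgi, hgj⟩
      have hc : c = Quot.mk _ (toFixed 𝒢 P (E.symm c).1 gi) := by
        have : E.symm c = ⟨(E.symm c).1, Quot.mk _ gi⟩ := by
          rw [Sigma.ext_iff]; exact ⟨rfl, heq_of_eq hgi.symm⟩
        have := congrArg E this
        rwa [Equiv.apply_symm_apply] at this
      have hd : d = Quot.mk _ (toFixed 𝒢 P (E.symm d).1 gj) := by
        have : E.symm d = ⟨(E.symm d).1, Quot.mk _ gj⟩ := by
          rw [Sigma.ext_iff]; exact ⟨rfl, heq_of_eq hgj.symm⟩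
        have := congrArg E this
        rwa [Equiv.apply_symm_apply] at this
      exact ⟨toFixed 𝒢 P (E.symm c).1 gi, toFixed 𝒢 P (E.symm d).1 gj, hc.symm, hd.symm,
        hTadj, gi.val, rfl, congrArg QuotientGroup.mk hval⟩
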